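/- A ring R is left Q-copure split (every Q-copure left ideal is a direct summand of R) if and only if every left R-module is Q-copure Baer injective. -/

import Mathlib

universe u

variable {R : Type u}

/-- A linear map `f : A → B` is `Q`-copure if every module in `Q` is injective
relative to `f`. -/
def IsCopure [Ring R] (Q : ModuleCat.{u} R → Prop) {A B : Type u}
    [AddCommGroup A] [Module R A] [AddCommGroup B] [Module R B] (f : A →ₗ[R] B) : Prop :=
  ∀ M : ModuleCat.{u} R, Q M → ∀ g : A →ₗ[R] M, ∃ h : B →ₗ[R] M, ∀ a : A, h (f a) = g a

/-- A left ideal `I` of `R` is `Q`-copure if every module in `Q` is injective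
relative to the inclusion `I → R`. -/
def CopureIdeal [Ring R] (Q : ModuleCat.{u} R → Prop) (I : Ideal R) : Prop :=
  ∀ M : ModuleCat.{u} R, Q M → ∀ g : I →ₗ[R] M, ∃ h : R →ₗ[R] M, ∀ x : I, h x = g x

/-- `N` is `Q`-copure Baer injective if every homomorphism from a `Q`-copure
left ideal of `R` into `N` extends to `R`. -/
def CopureBaerInjective [Ring R] (Q : ModuleCat.{u} R → Prop) (N : Type*)
    [AddCommGroup N] [Module R N] : Prop :=
  ∀ I : Ideal R, CopureIdeal Q I → ∀ g : I →ₗ[R] N, ∃ h : R →ₗ[R] N, ∀ x : I, h x = g x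

theorem copureSplit_iff_all_copureBaerInjective [Ring R] (Q : ModuleCat.{u} R → Prop) :
    (∀ I : Ideal R, CopureIdeal Q I → ∃ J : Ideal R, IsCompl I J) ↔
      ∀ (M : Type u) [AddCommGroup M] [Module R M], CopureBaerInjective Q M := by
  constructor
  · intro hsplit M _ _ I hI g
    obtain ⟨J, hJ⟩ := hsplit I hI
    exact ⟨g.comp (I.projectionOnto J hJ), fun x => by
      simp [Submodule.projectionOnto_apply_left]⟩
  · intro hbaer I hI
    obtain ⟨h, hh⟩ := hbaer I I hI LinearMap.id
    refine ⟨LinearMap.ker h, LinearMap.isCompl_of_proj ?_⟩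
    intro x
    exact hh x
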